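/- If t is a β-normal λ-term such that Γ ⊢_F t : A, then there exists a λ-term t' that is η-long of type A in the context Γ and such that t' η-reduces to t. -/

import Mathlib

set_option maxHeartbeats 1000000


/-- Untyped λ-terms in de Bruijn representation. -/
inductive Trm : Type
  | var : ℕ → Trm
  | app : Trm → Trm → Trm
  | lam : Trm → Trm
  deriving DecidableEq

namespace Trm

/-- The set of free variables of a term (as de Bruijn indices). -/
def fv : Trm → Set ℕ
  | var n => {n}
  | app u v => fv u ∪ fv v
  | lam u => {n | n + 1 ∈ fv u}

/-- A term is closed if it has no free variables. -/
def Closed (t : Trm) : Prop := fv t = ∅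

/-- λI-terms: abstraction is allowed only on variables occurring free in the body. -/
inductive IsLI : Trm → Prop
  | var (n : ℕ) : IsLI (var n)
  | app {u v : Trm} : IsLI u → IsLI v → IsLI (app u v)
  | lam {u : Trm} : IsLI u → 0 ∈ fv u → IsLI (lam u)

/-- Lifting of free variables ≥ d. -/
def lift (d : ℕ) : Trm → Trm
  | var n => if n < d then var n else var (n + 1)
  | app u v => app (lift d u) (lift d v)
  | lam u => lam (lift (d + 1) u)

def liftTimes (k : ℕ) (t : Trm) : Trm := (lift 0)^[k] t

/-- Capture-avoiding substitution of the k-th free variable. -/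
def subst : Trm → ℕ → Trm → Trm
  | var n, k, v => if n < k then var n else if n = k then liftTimes k v else var (n - 1)
  | app a b, k, v => app (subst a k v) (subst b k v)
  | lam a, k, v => lam (subst a (k + 1) v)

end Trm

/-- One step of β-reduction. -/
inductive Beta : Trm → Trm → Prop
  | beta {u v : Trm} : Beta (.app (.lam u) v) (u.subst 0 v)
  | appL {u u' v : Trm} : Beta u u' → Beta (.app u v) (.app u' v)
  | appR {u v v' : Trm} : Beta v v' → Beta (.app u v) (.app u v')
  | lam {u u' : Trm} : Beta u u' → Beta (.lam u) (.lam u')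

/-- One step of η-reduction: λx (u)x → u when x ∉ Fv(u). -/
inductive Eta : Trm → Trm → Prop
  | eta (u : Trm) : Eta (.lam (.app (u.lift 0) (.var 0))) u
  | appL {u u' v : Trm} : Eta u u' → Eta (.app u v) (.app u' v)
  | appR {u v v' : Trm} : Eta v v' → Eta (.app u v) (.app u v')
  | lam {u u' : Trm} : Eta u u' → Eta (.lam u) (.lam u')

/-- β-reduction (reflexive-transitive closure). -/
def BetaStar : Trm → Trm → Prop := Relation.ReflTransGen Beta

/-- βη-reduction (reflexive-transitive closure of the union of β and η). -/
def BetaEtaStar : Trm → Trm → Prop := Relation.ReflTransGen (fun a b => Beta a b ∨ Eta a b)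

/-- η-reduction (reflexive-transitive closure). -/
def EtaStar : Trm → Trm → Prop := Relation.ReflTransGen Eta

/-- A term is β-normal iff it contains no β-redex. -/
def BetaNormal (t : Trm) : Prop := ∀ u, ¬ Beta t u

/-- A term is βη-normal iff it contains neither a β-redex nor an η-redex. -/
def BetaEtaNormal (t : Trm) : Prop := ∀ u, ¬ Beta t u ∧ ¬ Eta t u

/-- A term is strongly normalizable iff every β-reduction sequence from it is finite. -/
def StronglyNormalizable (t : Trm) : Prop :=
  ¬ ∃ f : ℕ → Trm, f 0 = t ∧ ∀ n, Beta (f n) (f (n + 1))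

/-- Types of system F in de Bruijn representation. -/
inductive Ty : Type
  | var : ℕ → Ty
  | arr : Ty → Ty → Ty
  | all : Ty → Ty
  deriving DecidableEq

namespace Ty

/-- Free type variables. -/
def tfv : Ty → Set ℕ
  | var n => {n}
  | arr A B => tfv A ∪ tfv B
  | all A => {n | n + 1 ∈ tfv A}

/-- Lifting of free type variables ≥ d. -/
def tlift (d : ℕ) : Ty → Ty
  | var n => if n < d then var n else var (n + 1)
  | arr A B => arr (tlift d A) (tlift d B)
  | all A => all (tlift (d + 1) A)

def tliftTimes (k : ℕ) (A : Ty) : Ty := (tlift 0)^[k] A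

/-- Substitution of the k-th free type variable. -/
def tsubst : Ty → ℕ → Ty → Ty
  | var n, k, G => if n < k then var n else if n = k then tliftTimes k G else var (n - 1)
  | arr A B, k, G => arr (tsubst A k G) (tsubst B k G)
  | all A, k, G => all (tsubst A (k + 1) G)

/-- Proper types: in every subtype ∀X E, the variable X occurs free in E. -/
def Proper : Ty → Prop
  | var _ => True
  | arr A B => Proper A ∧ Proper B
  | all A => Proper A ∧ 0 ∈ tfv A

/-- Closed types. -/
def ClosedTy (A : Ty) : Prop := tfv A = ∅

end Ty

/-- Typing derivations of system F (restricted to proper types), as explicit trees. -/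
inductive Deriv : List Ty → Trm → Ty → Type
  | ax {Γ : List Ty} {n : ℕ} {A : Ty} :
      Γ[n]? = some A → (∀ B ∈ Γ, B.Proper) → Deriv Γ (.var n) A
  | arrI {Γ : List Ty} {A B : Ty} {t : Trm} :
      A.Proper → Deriv (A :: Γ) t B → Deriv Γ (.lam t) (.arr A B)
  | arrE {Γ : List Ty} {A B : Ty} {u v : Trm} :
      Deriv Γ u (.arr A B) → Deriv Γ v A → Deriv Γ (.app u v) B
  | allI {Γ : List Ty} {A : Ty} {t : Trm} :
      0 ∈ Ty.tfv A → Deriv (Γ.map (Ty.tlift 0)) t A → Deriv Γ t (.all A)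
  | allE {Γ : List Ty} {A : Ty} {t : Trm} (G : Ty) :
      G.Proper → 0 ∈ Ty.tfv A → Deriv Γ t (.all A) → Deriv Γ t (A.tsubst 0 G)

/-- A term of the form (x)t₁...tₙ whose head is a variable. -/
def isHeadVar : Trm → Prop
  | .var _ => True
  | .app u _ => isHeadVar u
  | .lam _ => False

/-- A derivation uses the rule (∀e)₂ iff some (∀e) node in it has a subject term
of the form (x)t₁...tₙ with head a variable. -/
inductive UsesAllE2 : ∀ {Γ : List Ty} {t : Trm} {A : Ty}, Deriv Γ t A → Prop
  | arrI {Γ : List Ty} {A B : Ty} {t : Trm} (h : Ty.Proper A) (d : Deriv (A :: Γ) t B) :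
      UsesAllE2 d → UsesAllE2 (Deriv.arrI h d)
  | arrEL {Γ : List Ty} {A B : Ty} {u v : Trm} (d : Deriv Γ u (.arr A B)) (e : Deriv Γ v A) :
      UsesAllE2 d → UsesAllE2 (Deriv.arrE d e)
  | arrER {Γ : List Ty} {A B : Ty} {u v : Trm} (d : Deriv Γ u (.arr A B)) (e : Deriv Γ v A) :
      UsesAllE2 e → UsesAllE2 (Deriv.arrE d e)
  | allI {Γ : List Ty} {A : Ty} {t : Trm} (h : 0 ∈ Ty.tfv A) (d : Deriv (List.map (Ty.tlift 0) Γ) t A) :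
      UsesAllE2 d → UsesAllE2 (Deriv.allI h d)
  | allE_self {Γ : List Ty} {A : Ty} {t : Trm} (G : Ty) (hG : G.Proper) (hA : 0 ∈ Ty.tfv A)
      (d : Deriv Γ t (.all A)) : isHeadVar t → UsesAllE2 (Deriv.allE G hG hA d)
  | allE_rec {Γ : List Ty} {A : Ty} {t : Trm} (G : Ty) (hG : G.Proper) (hA : 0 ∈ Ty.tfv A)
      (d : Deriv Γ t (.all A)) : UsesAllE2 d → UsesAllE2 (Deriv.allE G hG hA d)

mutual
  /-- A derivation is η-long: all essential subterms of the (β-normal) subject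
  are typed by type variables in the derivation. -/
  inductive EP : ∀ {Γ : List Ty} {t : Trm} {A : Ty}, Deriv Γ t A → Prop
    | arrI {Γ : List Ty} {A B : Ty} {t : Trm} (h : Ty.Proper A) (d : Deriv (A :: Γ) t B) :
        EP d → EP (Deriv.arrI h d)
    | allI {Γ : List Ty} {A : Ty} {t : Trm} (h : 0 ∈ Ty.tfv A) (d : Deriv (List.map (Ty.tlift 0) Γ) t A) :
        EP d → EP (Deriv.allI h d)
    | head {Γ : List Ty} {t : Trm} {X : ℕ} (d : Deriv Γ t (Ty.var X)) : HP d → EP d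
  /-- Auxiliary predicate for the head part (x)t₁...tₘ of an η-long derivation. -/
  inductive HP : ∀ {Γ : List Ty} {t : Trm} {A : Ty}, Deriv Γ t A → Prop
    | ax {Γ : List Ty} {n : ℕ} {A : Ty} (h₁ : Γ[n]? = some A) (h₂ : ∀ B ∈ Γ, B.Proper) :
        HP (Deriv.ax h₁ h₂)
    | arrE {Γ : List Ty} {A B : Ty} {u v : Trm} (d : Deriv Γ u (.arr A B)) (e : Deriv Γ v A) :
        HP d → EP e → HP (Deriv.arrE d e)
    | allE {Γ : List Ty} {A : Ty} {t : Trm} (G : Ty) (hG : G.Proper) (hA : 0 ∈ Ty.tfv A)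
        (d : Deriv Γ t (.all A)) : HP d → HP (Deriv.allE G hG hA d)
end

/-- t is an η-long term of type A in the context Γ. -/
def EtaLong (Γ : List Ty) (t : Trm) (A : Ty) : Prop := ∃ d : Deriv Γ t A, EP d

namespace Ty

theorem tlift_var_lt {n d : ℕ} (h : n < d) : tlift d (var n) = var n := by
  simp [tlift, h]
theorem tlift_var_ge {n d : ℕ} (h : d ≤ n) : tlift d (var n) = var (n+1) := by
  simp [tlift]; omega
theorem tsubst_var_lt {n k : ℕ} (G : Ty) (h : n < k) : tsubst (var n) k G = var n := by
  simp [tsubst, h]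
theorem tsubst_var_eq {k : ℕ} (G : Ty) : tsubst (var k) k G = tliftTimes k G := by
  simp [tsubst]
theorem tsubst_var_gt {n k : ℕ} (G : Ty) (h : k < n) : tsubst (var n) k G = var (n-1) := by
  rw [tsubst, if_neg (by omega), if_neg (by omega)]

theorem tlift_tlift (A : Ty) : ∀ d e, d ≤ e →
    tlift d (tlift e A) = tlift (e+1) (tlift d A) := by
  induction A with
  | var n =>
      intro d e h
      rcases Nat.lt_or_ge n d with h1 | h1
      · rw [tlift_var_lt (show n < e by omega), tlift_var_lt h1, tlift_var_lt (show n < e + 1 by omega)]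
      · rcases Nat.lt_or_ge n e with h2 | h2
        · rw [tlift_var_lt h2, tlift_var_ge h1, tlift_var_lt (by omega)]
        · rw [tlift_var_ge h2, tlift_var_ge (by omega : d ≤ n + 1), tlift_var_ge h1,
            tlift_var_ge (by omega : e + 1 ≤ n + 1)]
  | arr A B ihA ihB => intro d e h; simp only [tlift]; rw [ihA d e h, ihB d e h]
  | all A ih => intro d e h; simp only [tlift]; rw [ih (d+1) (e+1) (by omega)]

theorem tliftTimes_succ (k : ℕ) (A : Ty) :
    tliftTimes (k+1) A = tlift 0 (tliftTimes k A) := by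
  simp [tliftTimes, Function.iterate_succ_apply']

theorem tlift_tliftTimes (d j : ℕ) (X : Ty) :
    tlift d (tliftTimes (d+j) X) = tliftTimes (d+j+1) X := by
  induction d generalizing j with
  | zero => simp [tliftTimes_succ]
  | succ d ih =>
      rw [show d + 1 + j = (d + j) + 1 by omega, tliftTimes_succ,
        ← tlift_tlift _ 0 d (by omega), ih j, ← tliftTimes_succ]

theorem tlift_tliftTimes' (k d : ℕ) (X : Ty) :
    tlift (k+d) (tliftTimes k X) = tliftTimes k (tlift d X) := by
  induction k with
  | zero => simp [tliftTimes]
  | succ k ih =>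
      rw [tliftTimes_succ, show k + 1 + d = (k + d) + 1 by omega,
        ← tlift_tlift _ 0 (k+d) (by omega), ih, ← tliftTimes_succ]

theorem tsubst_tlift (A : Ty) : ∀ d G, tsubst (tlift d A) d G = A := by
  induction A with
  | var n =>
      intro d G
      rcases Nat.lt_or_ge n d with h1 | h1
      · rw [tlift_var_lt h1, tsubst_var_lt G h1]
      · rw [tlift_var_ge h1, tsubst_var_gt G (by omega)]; congr 1 <;> omega
  | arr A B ihA ihB => intro d G; simp only [tlift, tsubst]; rw [ihA, ihB]
  | all A ih => intro d G; simp only [tlift, tsubst]; rw [ih]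

theorem tliftTimes_var (k n : ℕ) : tliftTimes k (var n) = var (n + k) := by
  induction k with
  | zero => simp [tliftTimes]
  | succ k ih => rw [tliftTimes_succ, ih, tlift_var_ge (by omega)]; congr 1 <;> omega

theorem tsubst_tlift_var0 (A : Ty) : ∀ d, tsubst (tlift (d+1) A) d (var 0) = A := by
  induction A with
  | var n =>
      intro d
      rcases lt_trichotomy n d with h1 | rfl | h1
      · rw [tlift_var_lt (by omega), tsubst_var_lt _ h1]
      · rw [tlift_var_lt (by omega), tsubst_var_eq, tliftTimes_var]; congr 1; omega
      · rw [tlift_var_ge (by omega), tsubst_var_gt _ (by omega)]; congr 1 <;> omega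
  | arr A B ihA ihB => intro d; simp only [tlift, tsubst]; rw [ihA, ihB]
  | all A ih => intro d; simp only [tlift, tsubst]; rw [ih]

theorem tsubst_tlift_comm (A : Ty) : ∀ d k G, d ≤ k →
    tsubst (tlift d A) (k+1) G = tlift d (tsubst A k G) := by
  induction A with
  | var n =>
      intro d k G h
      rcases lt_trichotomy n k with h1 | rfl | h1
      · rcases Nat.lt_or_ge n d with h2 | h2
        · rw [tlift_var_lt h2, tsubst_var_lt _ (by omega), tsubst_var_lt _ h1, tlift_var_lt h2]
        · rw [tlift_var_ge h2, tsubst_var_lt _ (by omega), tsubst_var_lt _ h1, tlift_var_ge h2]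
      · rw [tlift_var_ge h, tsubst_var_eq, tsubst_var_eq]
        obtain ⟨j, rfl⟩ : ∃ j, n = d + j := ⟨n - d, by omega⟩
        exact (tlift_tliftTimes d j G).symm
      · rw [tlift_var_ge (by omega), tsubst_var_gt _ (by omega), tsubst_var_gt _ h1,
          tlift_var_ge (by omega)]
        congr 1; omega
  | arr A B ihA ihB => intro d k G h; simp only [tlift, tsubst]; rw [ihA _ _ _ h, ihB _ _ _ h]
  | all A ih => intro d k G h; simp only [tlift, tsubst]; rw [ih (d+1) (k+1) G (by omega)]

theorem tsubst_tliftTimes (Y : Ty) (j k : ℕ) (G : Ty) :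
    tsubst (tliftTimes j Y) (j + k) G = tliftTimes j (tsubst Y k G) := by
  induction j generalizing k with
  | zero => simp [tliftTimes]
  | succ j ih =>
      rw [tliftTimes_succ, show j + 1 + k = (j + k) + 1 by omega,
        tsubst_tlift_comm _ 0 (j+k) G (by omega), ih, ← tliftTimes_succ]

theorem tsubst_tliftTimes_cancel (X : Ty) (m j : ℕ) (H : Ty) (h : j ≤ m) :
    tsubst (tliftTimes (m+1) X) j H = tliftTimes m X := by
  obtain ⟨r, rfl⟩ : ∃ r, m = j + r := ⟨m - j, by omega⟩
  rw [← tlift_tliftTimes j r X, tsubst_tlift]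

theorem tlift_tsubst (A : Ty) : ∀ k d G,
    tlift (k+d) (tsubst A k G) = tsubst (tlift (k+d+1) A) k (tlift d G) := by
  induction A with
  | var n =>
      intro k d G
      rcases lt_trichotomy n k with h1 | rfl | h1
      · rw [tsubst_var_lt _ h1, tlift_var_lt (by omega), tlift_var_lt (by omega),
          tsubst_var_lt _ h1]
      · rw [tsubst_var_eq, tlift_var_lt (by omega), tsubst_var_eq]
        exact tlift_tliftTimes' n d G
      · rcases Nat.lt_or_ge n (k+d+1) with h2 | h2
        · rw [tsubst_var_gt _ h1, tlift_var_lt (by omega), tlift_var_lt h2, tsubst_var_gt _ h1]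
        · rw [tsubst_var_gt _ h1, tlift_var_ge (by omega), tlift_var_ge h2,
            tsubst_var_gt _ (by omega)]
          congr 1; omega
  | arr A B ihA ihB => intro k d G; simp only [tlift, tsubst]; rw [ihA, ihB]
  | all A ih =>
      intro k d G
      simp only [tlift, tsubst]
      rw [show k + d + 1 = (k+1) + d by omega, ih (k+1) d G,
        show k + 1 + d + 1 = k + d + 1 + 1 by omega]

theorem tsubst_tsubst (A : Ty) : ∀ j k G G',
    tsubst (tsubst A (j+k+1) G) j (tsubst G' k G) = tsubst (tsubst A j G') (j+k) G := by
  induction A with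
  | var n =>
      intro j k G G'
      rcases lt_trichotomy n j with h1 | rfl | h1
      · rw [tsubst_var_lt _ (by omega), tsubst_var_lt _ h1, tsubst_var_lt _ h1,
          tsubst_var_lt _ (by omega)]
      · rw [tsubst_var_lt _ (by omega), tsubst_var_eq, tsubst_var_eq,
          tsubst_tliftTimes G' n k G]
      · rcases lt_trichotomy n (j+k+1) with h2 | rfl | h2
        · rw [tsubst_var_lt _ h2, tsubst_var_gt _ h1, tsubst_var_gt _ h1,
            tsubst_var_lt _ (by omega)]
        · rw [tsubst_var_eq, tsubst_tliftTimes_cancel _ _ _ _ (by omega),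
            tsubst_var_gt _ h1, show j + k + 1 - 1 = j + k by omega, tsubst_var_eq]
        · rw [tsubst_var_gt _ h2, tsubst_var_gt _ (by omega), tsubst_var_gt _ (by omega),
            tsubst_var_gt _ (by omega)]
  | arr A B ihA ihB => intro j k G G'; simp only [tsubst]; rw [ihA, ihB]
  | all A ih =>
      intro j k G G'
      simp only [tsubst]
      rw [show j + k + 1 + 1 = (j+1) + k + 1 by omega, ih (j+1) k G G',
        show j + 1 + k = j + k + 1 by omega]

theorem mem_tfv_tlift (A : Ty) : ∀ d m, m ∈ tfv (tlift d A) ↔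
    (m < d ∧ m ∈ tfv A) ∨ (d < m ∧ m - 1 ∈ tfv A) := by
  induction A with
  | var n =>
      intro d m
      rcases Nat.lt_or_ge n d with h1 | h1
      · rw [tlift_var_lt h1]
        simp only [tfv, Set.mem_singleton_iff]
        constructor
        · rintro rfl; exact Or.inl ⟨h1, rfl⟩
        · rintro (⟨_, rfl⟩ | ⟨h2, h3⟩); · rfl
          · omega
      · rw [tlift_var_ge h1]
        simp only [tfv, Set.mem_singleton_iff]
        constructor
        · rintro rfl; exact Or.inr ⟨by omega, by omega⟩
        · rintro (⟨h2, rfl⟩ | ⟨h2, h3⟩); · omega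
          · omega
  | arr A B ihA ihB =>
      intro d m
      simp only [tlift, tfv, Set.mem_union, ihA, ihB]
      tauto
  | all A ih =>
      intro d m
      simp only [tlift, tfv, Set.mem_setOf_eq]
      rw [ih (d+1) (m+1)]
      constructor
      · rintro (⟨h1, h2⟩ | ⟨h1, h2⟩)
        · exact Or.inl ⟨by omega, h2⟩
        · exact Or.inr ⟨by omega, by rw [show m - 1 + 1 = m + 1 - 1 by omega]; exact h2⟩
      · rintro (⟨h1, h2⟩ | ⟨h1, h2⟩)
        · exact Or.inl ⟨by omega, h2⟩
        · exact Or.inr ⟨by omega, by rw [show m + 1 - 1 = m - 1 + 1 by omega]; exact h2⟩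

theorem not_mem_tfv_tliftTimes (G : Ty) (k m : ℕ) (h : m < k) :
    m ∉ tfv (tliftTimes k G) := by
  induction k generalizing m with
  | zero => omega
  | succ k ih =>
      rw [tliftTimes_succ]
      intro hm
      rw [mem_tfv_tlift] at hm
      rcases hm with ⟨h1, _⟩ | ⟨h1, h2⟩
      · omega
      · exact ih (m-1) (by omega) h2

theorem mem_tfv_tsubst_lt (A : Ty) : ∀ k G m, m < k →
    (m ∈ tfv (tsubst A k G) ↔ m ∈ tfv A) := by
  induction A with
  | var n =>
      intro k G m h
      rcases lt_trichotomy n k with h1 | rfl | h1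
      · rw [tsubst_var_lt _ h1]
      · rw [tsubst_var_eq]
        simp only [tfv, Set.mem_singleton_iff]
        constructor
        · intro hm; exact absurd hm (not_mem_tfv_tliftTimes G n m h)
        · omega
      · rw [tsubst_var_gt _ h1]
        simp only [tfv, Set.mem_singleton_iff]
        omega
  | arr A B ihA ihB =>
      intro k G m h
      simp only [tsubst, tfv, Set.mem_union, ihA _ _ _ h, ihB _ _ _ h]
  | all A ih =>
      intro k G m h
      simp only [tsubst, tfv, Set.mem_setOf_eq]
      exact ih (k+1) G (m+1) (by omega)

theorem Proper_tlift (A : Ty) : ∀ d, Proper (tlift d A) ↔ Proper A := by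
  induction A with
  | var n =>
      intro d
      rcases Nat.lt_or_ge n d with h1 | h1
      · rw [tlift_var_lt h1]
      · rw [tlift_var_ge h1]; simp [Proper]
  | arr A B ihA ihB => intro d; simp only [tlift, Proper]; rw [ihA, ihB]
  | all A ih =>
      intro d
      simp only [tlift, Proper]
      rw [ih, mem_tfv_tlift]
      constructor
      · rintro ⟨h1, (⟨h2, h3⟩ | ⟨h2, _⟩)⟩; · exact ⟨h1, h3⟩
        · omega
      · rintro ⟨h1, h2⟩; exact ⟨h1, Or.inl ⟨by omega, h2⟩⟩

theorem Proper_tliftTimes (G : Ty) (k : ℕ) (h : Proper G) : Proper (tliftTimes k G) := by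
  induction k with
  | zero => exact h
  | succ k ih => rw [tliftTimes_succ, Proper_tlift]; exact ih

theorem Proper_tsubst (A : Ty) : ∀ k G, Proper A → Proper G → Proper (tsubst A k G) := by
  induction A with
  | var n =>
      intro k G _ hG
      rcases lt_trichotomy n k with h1 | rfl | h1
      · rw [tsubst_var_lt _ h1]; trivial
      · rw [tsubst_var_eq]; exact Proper_tliftTimes G n hG
      · rw [tsubst_var_gt _ h1]; trivial
  | arr A B ihA ihB => intro k G h hG; exact ⟨ihA _ _ h.1 hG, ihB _ _ h.2 hG⟩
  | all A ih =>
      intro k G h hG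
      exact ⟨ih _ _ h.1 hG, (mem_tfv_tsubst_lt A (k+1) G 0 (by omega)).2 h.2⟩

end Ty
/-! ### Term-level auxiliary lemmas -/

def sizeT : Trm → ℕ
  | .var _ => 1
  | .app u v => sizeT u + sizeT v + 1
  | .lam u => sizeT u + 1

theorem sizeT_pos (t : Trm) : 1 ≤ sizeT t := by cases t <;> simp [sizeT]

theorem bn_lam {u : Trm} (h : BetaNormal (.lam u)) : BetaNormal u :=
  fun v hb => h _ (Beta.lam hb)
theorem bn_appL {u v : Trm} (h : BetaNormal (.app u v)) : BetaNormal u :=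
  fun w hb => h _ (Beta.appL hb)
theorem bn_appR {u v : Trm} (h : BetaNormal (.app u v)) : BetaNormal v :=
  fun w hb => h _ (Beta.appR hb)

theorem headVar_of_bn : ∀ u : Trm, BetaNormal u → (∀ w, u ≠ .lam w) → isHeadVar u := by
  intro u
  induction u with
  | var n => intro _ _; trivial
  | lam w => intro _ h; exact absurd rfl (h w)
  | app a b iha _ =>
      intro h _
      exact iha (bn_appL h) (fun w e => (h (w.subst 0 b) (by rw [e]; exact Beta.beta)).elim)

theorem isHeadVar_lift : ∀ (t : Trm) (d : ℕ), isHeadVar t → isHeadVar (t.lift d) := by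
  intro t
  induction t with
  | var n => intro d _; simp only [Trm.lift]; split <;> trivial
  | app a b iha _ => intro d h; exact iha d h
  | lam => intro d h; exact h.elim

theorem etaStar_appL {u u' v : Trm} (h : EtaStar u u') : EtaStar (.app u v) (.app u' v) := by
  induction h with
  | refl => exact .refl
  | tail _ h2 ih => exact ih.tail (Eta.appL h2)

theorem etaStar_appR {u v v' : Trm} (h : EtaStar v v') : EtaStar (.app u v) (.app u v') := by
  induction h with
  | refl => exact .refl
  | tail _ h2 ih => exact ih.tail (Eta.appR h2)

theorem etaStar_lam {u u' : Trm} (h : EtaStar u u') : EtaStar (.lam u) (.lam u') := by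
  induction h with
  | refl => exact .refl
  | tail _ h2 ih => exact ih.tail (Eta.lam h2)

/-! ### Derivation infrastructure -/

def dsize : ∀ {Γ t A}, Deriv Γ t A → ℕ
  | _, _, _, .ax _ _ => 1
  | _, _, _, .arrI _ d => dsize d + 1
  | _, _, _, .arrE d e => dsize d + dsize e + 1
  | _, _, _, .allI _ d => dsize d + 1
  | _, _, _, .allE _ _ _ d => dsize d + 1

def cctx {Γ Γ' : List Ty} {t A} (h : Γ = Γ') (d : Deriv Γ t A) : Deriv Γ' t A := h ▸ d
def cty {Γ : List Ty} {t : Trm} {A A' : Ty} (h : A = A') (d : Deriv Γ t A) : Deriv Γ t A' := h ▸ d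
def ctm {Γ : List Ty} {t t' : Trm} {A : Ty} (h : t = t') (d : Deriv Γ t A) : Deriv Γ t' A := h ▸ d

@[simp] theorem dsize_cctx {Γ Γ' t A} (h : Γ = Γ') (d : Deriv Γ t A) :
    dsize (cctx h d) = dsize d := by subst h; rfl
@[simp] theorem dsize_cty {Γ t A A'} (h : A = A') (d : Deriv Γ t A) :
    dsize (cty h d) = dsize d := by subst h; rfl
theorem hp_cctx {Γ Γ' t A} (h : Γ = Γ') (d : Deriv Γ t A) : HP (cctx h d) ↔ HP d := by
  subst h; exact Iff.rfl
theorem hp_cty {Γ t A A'} (h : A = A') (d : Deriv Γ t A) : HP (cty h d) ↔ HP d := by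
  subst h; exact Iff.rfl
theorem ep_cctx {Γ Γ' t A} (h : Γ = Γ') (d : Deriv Γ t A) : EP (cctx h d) ↔ EP d := by
  subst h; exact Iff.rfl
theorem ep_cty {Γ t A A'} (h : A = A') (d : Deriv Γ t A) : EP (cty h d) ↔ EP d := by
  subst h; exact Iff.rfl
theorem hp_ctm {Γ t t' A} (h : t = t') (d : Deriv Γ t A) : HP (ctm h d) ↔ HP d := by
  subst h; exact Iff.rfl
theorem ep_ctm {Γ t t' A} (h : t = t') (d : Deriv Γ t A) : EP (ctm h d) ↔ EP d := by
  subst h; exact Iff.rfl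

theorem mem_of_get? {α : Type _} {l : List α} {n : ℕ} {a : α} (h : l[n]? = some a) : a ∈ l := by
  obtain ⟨h1, rfl⟩ := List.getElem?_eq_some_iff.1 h
  exact List.getElem_mem h1

theorem dctx {Γ t A} (d : Deriv Γ t A) : ∀ B ∈ Γ, B.Proper := by
  induction d with
  | ax h1 h2 => exact h2
  | arrI hA d ih => exact fun B hB => ih B (List.mem_cons_of_mem _ hB)
  | arrE d e ihd ihe => exact ihd
  | allI h d ih =>
      intro B hB
      exact (Ty.Proper_tlift B 0).1 (ih (Ty.tlift 0 B) (List.mem_map_of_mem hB))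
  | allE G hG hA d ih => exact ih

theorem dty {Γ t A} (d : Deriv Γ t A) : A.Proper := by
  induction d with
  | ax h1 h2 => exact h2 _ (mem_of_get? h1)
  | arrI hA d ih => exact ⟨hA, ih⟩
  | arrE d e ihd ihe => exact ihd.2
  | allI h _ ih => exact ⟨ih, h⟩
  | allE G hG hA d ih => exact Ty.Proper_tsubst _ 0 G ih.1 hG

/-! ### Inversion for HP / EP -/

def HPinv : ∀ {Γ t A}, Deriv Γ t A → Prop
  | _, _, _, .ax _ _ => True
  | _, _, _, .arrI _ _ => False
  | _, _, _, .arrE d e => HP d ∧ EP e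
  | _, _, _, .allI _ _ => False
  | _, _, _, .allE _ _ _ d => HP d

def EPinv : ∀ {Γ t A}, Deriv Γ t A → Prop
  | _, _, A, .ax _ _ => ∃ X, A = Ty.var X
  | _, _, _, .arrI _ d => EP d
  | _, _, _, .arrE (B := B) d e => HP (Deriv.arrE d e) ∧ ∃ X, B = Ty.var X
  | _, _, _, .allE (A := A) G hG hA d =>
      HP (Deriv.allE G hG hA d) ∧ ∃ X, A.tsubst 0 G = Ty.var X
  | _, _, _, .allI _ d => EP d

theorem hp_invert : ∀ {Γ t A} {d : Deriv Γ t A}, HP d → HPinv d := by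
  intro _ _ _ _ h
  cases h with
  | ax => trivial
  | arrE _ _ h1 h2 => exact ⟨h1, h2⟩
  | allE _ _ _ _ h1 => exact h1

theorem hp_epinv : ∀ {Γ t A} {d : Deriv Γ t A}, HP d → (∃ X, A = Ty.var X) → EPinv d := by
  intro _ _ _ _ hp hv
  cases hp with
  | ax h1 h2 => exact hv
  | arrE _ _ h1 h2 => exact ⟨HP.arrE _ _ h1 h2, hv⟩
  | allE _ _ _ _ h1 => exact ⟨HP.allE _ _ _ _ h1, hv⟩

theorem ep_invert : ∀ {Γ t A} {d : Deriv Γ t A}, EP d → EPinv d := by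
  intro _ _ _ _ h
  cases h with
  | arrI _ _ h1 => exact h1
  | allI _ _ h1 => exact h1
  | head d hp => exact hp_epinv hp ⟨_, rfl⟩

theorem ep_of_var {Γ t A} (d : Deriv Γ t A) (hv : ∃ X, A = Ty.var X) (hp : HP d) : EP d := by
  obtain ⟨X, rfl⟩ := hv; exact EP.head _ hp

theorem tlift_isvar (m X : ℕ) : ∃ Y, Ty.tlift m (Ty.var X) = Ty.var Y := by
  rcases Nat.lt_or_ge X m with h | h
  · exact ⟨X, Ty.tlift_var_lt h⟩
  · exact ⟨X + 1, Ty.tlift_var_ge h⟩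
/-! ### Type substitution in derivations -/

theorem map_ctx_comm (Γ : List Ty) (k : ℕ) (G : Ty) :
    (Γ.map (Ty.tlift 0)).map (fun B => B.tsubst (k+1) G)
      = (Γ.map (fun B => B.tsubst k G)).map (Ty.tlift 0) := by
  simp only [List.map_map]
  exact List.map_congr_left (fun B _ => Ty.tsubst_tlift_comm B 0 k G (Nat.zero_le k))

theorem map_ctx_lift (Γ : List Ty) (m : ℕ) :
    (Γ.map (Ty.tlift 0)).map (Ty.tlift (m+1))
      = (Γ.map (Ty.tlift m)).map (Ty.tlift 0) := by
  simp only [List.map_map]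
  exact List.map_congr_left (fun B _ => (Ty.tlift_tlift B 0 m (Nat.zero_le m)).symm)

def TSub (G : Ty) (hG : G.Proper) : ∀ {Γ t A} (k : ℕ), Deriv Γ t A →
    Deriv (Γ.map (fun B => B.tsubst k G)) t (A.tsubst k G)
  | _, _, _, k, .ax h₁ h₂ =>
      .ax (by rw [List.getElem?_map, h₁]; rfl)
        (fun B hB => by
          obtain ⟨C, hC, rfl⟩ := List.mem_map.1 hB
          exact Ty.Proper_tsubst C k G (h₂ C hC) hG)
  | _, _, _, k, .arrI hA d => .arrI (Ty.Proper_tsubst _ k G hA hG) (TSub G hG k d)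
  | _, _, _, k, .arrE d e => .arrE (TSub G hG k d) (TSub G hG k e)
  | Γ, _, _, k, .allI h d =>
      .allI ((Ty.mem_tfv_tsubst_lt _ (k+1) G 0 (by omega)).2 h)
        (cctx (map_ctx_comm Γ k G) (TSub G hG (k+1) d))
  | _, _, _, k, .allE (A := A) G' hG' hA d =>
      cty (by simpa using Ty.tsubst_tsubst A 0 k G G')
        (.allE (G'.tsubst k G) (Ty.Proper_tsubst _ k G hG' hG)
          ((Ty.mem_tfv_tsubst_lt _ (k+1) G 0 (by omega)).2 hA)
          (TSub G hG k d))

theorem dsize_TSub (G : Ty) (hG : G.Proper) : ∀ {Γ t A} (k : ℕ) (d : Deriv Γ t A),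
    dsize (TSub G hG k d) = dsize d := by
  intro Γ t A k d
  induction d generalizing k with
  | ax h1 h2 => rfl
  | arrI hA d ih => simp only [TSub, dsize, ih]
  | arrE d e ihd ihe => simp only [TSub, dsize, ihd, ihe]; exact congrArg (· + dsize e + 1) (ihd k)
  | allI h d ih => simp only [TSub, dsize, dsize_cctx, ih]
  | allE G' hG' hA d ih => simp only [TSub, dsize, dsize_cty, ih]; exact congrArg (· + 1) (ih k)

/-! ### Lifting of type variables in derivations -/

def TLW : (m : ℕ) → ∀ {Γ t A}, (d : Deriv Γ t A) →
    Σ' e : Deriv (Γ.map (Ty.tlift m)) t (A.tlift m), (HP d → HP e) ∧ (EP d → EP e)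
  | m, _, _, _, .ax h₁ h₂ =>
      ⟨.ax (by rw [List.getElem?_map, h₁]; rfl)
        (fun B hB => by
          obtain ⟨C, hC, rfl⟩ := List.mem_map.1 hB
          exact (Ty.Proper_tlift C m).2 (h₂ C hC)),
       fun _ => .ax _ _,
       fun hep => by
          obtain ⟨X, rfl⟩ := ep_invert hep
          exact ep_of_var _ (tlift_isvar m X) (.ax _ _)⟩
  | m, _, _, _, .arrI hA d =>
      let e := TLW m d
      ⟨.arrI ((Ty.Proper_tlift _ m).2 hA) e.1,
       fun hp => (hp_invert hp).elim,
       fun hep => .arrI _ _ (e.2.2 (ep_invert hep))⟩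
  | m, _, _, _, .arrE d₁ d₂ =>
      let e₁ := TLW m d₁
      let e₂ := TLW m d₂
      ⟨.arrE e₁.1 e₂.1,
       fun hp => .arrE _ _ (e₁.2.1 (hp_invert hp).1) (e₂.2.2 (hp_invert hp).2),
       fun hep => by
          obtain ⟨hp, X, hX⟩ := ep_invert hep
          refine ep_of_var _ ⟨?_, ?_⟩ (.arrE _ _ (e₁.2.1 (hp_invert hp).1) (e₂.2.2 (hp_invert hp).2))
          · exact (tlift_isvar m X).choose
          · rw [hX]; exact (tlift_isvar m X).choose_spec⟩
  | m, Γ, _, _, .allI h d =>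
      let e := TLW (m+1) d
      ⟨.allI ((Ty.mem_tfv_tlift _ (m+1) 0).2 (Or.inl ⟨by omega, h⟩))
          (cctx (map_ctx_lift Γ m) e.1),
       fun hp => (hp_invert hp).elim,
       fun hep => .allI _ _ ((ep_cctx _ _).2 (e.2.2 (ep_invert hep)))⟩
  | m, _, _, _, .allE (A := A) G hG hA d =>
      let e := TLW m d
      ⟨cty (by simpa using (Ty.tlift_tsubst A 0 m G).symm)
        (.allE (G.tlift m) ((Ty.Proper_tlift G m).2 hG)
          ((Ty.mem_tfv_tlift _ (m+1) 0).2 (Or.inl ⟨by omega, hA⟩)) e.1),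
       fun hp => (hp_cty _ _).2 (.allE _ _ _ _ (e.2.1 (hp_invert hp))),
       fun hep => by
          obtain ⟨hp, X, hX⟩ := ep_invert hep
          refine ep_of_var _ ⟨?_, ?_⟩ ((hp_cty _ _).2 (.allE _ _ _ _ (e.2.1 (hp_invert hp))))
          · exact (tlift_isvar m X).choose
          · rw [show Ty.tlift m (A.tsubst 0 G) = Ty.tlift m (Ty.var X) by rw [hX]]
            exact (tlift_isvar m X).choose_spec⟩

/-! ### Weakening of the term context -/

def TW : ∀ {Γ t A}, (d : Deriv Γ t A) → (Γ₁ Γ₂ : List Ty) → (C : Ty) → C.Proper →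
    Γ = Γ₁ ++ Γ₂ →
    Σ' e : Deriv (Γ₁ ++ C :: Γ₂) (t.lift Γ₁.length) A, (HP d → HP e) ∧ (EP d → EP e)
  | _, _, _, .ax (n := n) (A := A) h₁ h₂, Γ₁, Γ₂, C, hC, hΓ => by
      subst hΓ
      have hprop : ∀ B ∈ Γ₁ ++ C :: Γ₂, B.Proper := by
        intro B hB
        rcases List.mem_append.1 hB with h | h
        · exact h₂ B (List.mem_append.2 (Or.inl h))
        · rcases List.mem_cons.1 h with rfl | h
          · exact hC
          · exact h₂ B (List.mem_append.2 (Or.inr h))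
      by_cases hn : n < Γ₁.length
      · have ht : Trm.lift Γ₁.length (Trm.var n) = Trm.var n := by simp [Trm.lift, hn]
        rw [ht]
        have hl : (Γ₁ ++ C :: Γ₂)[n]? = some A := by
          rw [List.getElem?_append] at h₁ ⊢
          rw [if_pos hn] at h₁ ⊢
          exact h₁
        refine ⟨.ax hl hprop, fun _ => .ax _ _, fun hep => ?_⟩
        obtain ⟨X, rfl⟩ := ep_invert hep
        exact EP.head _ (.ax _ _)
      · have ht : Trm.lift Γ₁.length (Trm.var n) = Trm.var (n+1) := by
          simp [Trm.lift]; omega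
        rw [ht]
        have hl : (Γ₁ ++ C :: Γ₂)[n+1]? = some A := by
          rw [List.getElem?_append, if_neg (by omega)]
          rw [List.getElem?_append, if_neg (by omega)] at h₁
          rw [show n + 1 - Γ₁.length = (n - Γ₁.length) + 1 by omega]
          simpa using h₁
        refine ⟨.ax hl hprop, fun _ => .ax _ _, fun hep => ?_⟩
        obtain ⟨X, rfl⟩ := ep_invert hep
        exact EP.head _ (.ax _ _)
  | _, _, _, .arrI (A := A) hA d, Γ₁, Γ₂, C, hC, hΓ =>
      let e := TW d (A :: Γ₁) Γ₂ C hC (by rw [hΓ]; rfl)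
      ⟨.arrI hA e.1,
       fun hp => (hp_invert hp).elim,
       fun hep => .arrI _ _ (e.2.2 (ep_invert hep))⟩
  | _, _, _, .arrE d₁ d₂, Γ₁, Γ₂, C, hC, hΓ =>
      let e₁ := TW d₁ Γ₁ Γ₂ C hC hΓ
      let e₂ := TW d₂ Γ₁ Γ₂ C hC hΓ
      ⟨.arrE e₁.1 e₂.1,
       fun hp => .arrE _ _ (e₁.2.1 (hp_invert hp).1) (e₂.2.2 (hp_invert hp).2),
       fun hep => by
          obtain ⟨hp, X, rfl⟩ := ep_invert hep
          exact EP.head _ (.arrE _ _ (e₁.2.1 (hp_invert hp).1) (e₂.2.2 (hp_invert hp).2))⟩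
  | Γ, _, _, .allI h d, Γ₁, Γ₂, C, hC, hΓ =>
      let e := TW d (Γ₁.map (Ty.tlift 0)) (Γ₂.map (Ty.tlift 0)) (Ty.tlift 0 C)
        ((Ty.Proper_tlift C 0).2 hC) (by rw [hΓ, List.map_append])
      let e' : Deriv ((Γ₁ ++ C :: Γ₂).map (Ty.tlift 0)) (Trm.lift Γ₁.length _) _ :=
        cctx (by simp [List.map_append]) (ctm (by rw [List.length_map]) e.1)
      ⟨.allI h e',
       fun hp => (hp_invert hp).elim,
       fun hep => .allI _ _ ((ep_cctx _ _).2 ((ep_ctm _ _).2 (e.2.2 (ep_invert hep))))⟩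
  | _, _, _, .allE G hG hA d, Γ₁, Γ₂, C, hC, hΓ =>
      let e := TW d Γ₁ Γ₂ C hC hΓ
      ⟨.allE G hG hA e.1,
       fun hp => .allE _ _ _ _ (e.2.1 (hp_invert hp)),
       fun hep => by
          obtain ⟨hp, X, hX⟩ := ep_invert hep
          exact ep_of_var _ ⟨X, hX⟩ (.allE _ _ _ _ (e.2.1 (hp_invert hp)))⟩
/-! ### Main construction -/

def sizeTy : Ty → ℕ
  | .var _ => 1
  | .arr A B => sizeTy A + sizeTy B + 1
  | .all A => sizeTy A + 1

theorem sizeTy_pos (A : Ty) : 1 ≤ sizeTy A := by cases A <;> simp [sizeTy]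

theorem map_cancel (Γ : List Ty) (G : Ty) :
    (Γ.map (Ty.tlift 0)).map (fun B => B.tsubst 0 G) = Γ := by
  induction Γ with
  | nil => rfl
  | cons B Γ ih => simp only [List.map_cons, ih, Ty.tsubst_tlift]

/-- Generalized instantiation relation used for `lam` inversion. -/
inductive Inst : Ty → Ty → Prop
  | refl (A : Ty) : Inst A A
  | step {A B : Ty} (G : Ty) : G.Proper → Inst (A.tsubst 0 G) B → Inst (.all A) B

theorem lamInv : ∀ (N : ℕ) {Γ : List Ty} {u : Trm} {C : Ty} (d : Deriv Γ (.lam u) C),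
    dsize d ≤ N → ∀ B, Inst C B →
    (∀ X, B ≠ .var X) ∧ (∀ C₁ C₂, B = .arr C₁ C₂ → Nonempty (Deriv (C₁ :: Γ) u C₂)) := by
  intro N
  induction N with
  | zero => intro Γ u C d hd B hB; cases d <;> simp [dsize] at hd
  | succ N ih =>
      intro Γ u C d hd B hB
      cases d with
      | arrI hA d' =>
          cases hB with
          | refl =>
              constructor
              · intro X h; cases h
              · intro C₁ C₂ h
                injection h with h1 h2
                subst h1; subst h2
                exact ⟨d'⟩
      | allI h d' =>
          cases hB with
          | refl =>
              constructor
              · intro X h; cases h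
              · intro C₁ C₂ h; cases h
          | step G hG rest =>
              exact ih (cctx (map_cancel Γ G) (TSub G hG 0 d'))
                (by simp [dsize_cctx, dsize_TSub]; simp [dsize] at hd; omega) B rest
      | allE G hG hA d' =>
          exact ih d' (by simp [dsize] at hd ⊢; omega) B (.step G hG hB)

theorem expand : ∀ (m : ℕ) (A : Ty), sizeTy A ≤ m → A.Proper →
    ∀ (Γ : List Ty), (∀ B ∈ Γ, B.Proper) →
    ∀ t : Trm, isHeadVar t → (∃ d : Deriv Γ t A, HP d) →
    ∃ t', (∃ d' : Deriv Γ t' A, EP d') ∧ EtaStar t' t := by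
  intro m
  induction m with
  | zero => intro A h; have := sizeTy_pos A; omega
  | succ m ih =>
      rintro A hA hP Γ hΓ t ht ⟨d, hd⟩
      cases A with
      | var X => exact ⟨t, ⟨d, EP.head _ hd⟩, Relation.ReflTransGen.refl⟩
      | arr A₁ A₂ =>
          obtain ⟨P1, P2⟩ := hP
          have hcons : ∀ B ∈ A₁ :: Γ, B.Proper := by
            intro B hB
            rcases List.mem_cons.1 hB with rfl | hB
            · exact P1
            · exact hΓ B hB
          obtain ⟨e, ⟨de, hde⟩, he⟩ := ih A₁ (by simp [sizeTy] at hA ⊢; omega) P1 (A₁ :: Γ)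
            hcons (.var 0) trivial ⟨.ax (by simp) hcons, .ax _ _⟩
          let w := TW d [] Γ A₁ P1 rfl
          have hd2 : HP (Deriv.arrE w.1 de) := .arrE _ _ (w.2.1 hd) hde
          obtain ⟨b, ⟨db, hdb⟩, hb⟩ := ih A₂ (by simp [sizeTy] at hA ⊢; omega) P2 (A₁ :: Γ)
            hcons (.app (t.lift 0) e) (isHeadVar_lift t 0 ht) ⟨_, hd2⟩
          refine ⟨.lam b, ⟨.arrI P1 db, .arrI _ _ hdb⟩, ?_⟩
          have s1 : EtaStar (.lam b) (.lam (.app (t.lift 0) e)) := etaStar_lam hb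
          have s2 : EtaStar (.lam (.app (t.lift 0) e)) (.lam (.app (t.lift 0) (.var 0))) :=
            etaStar_lam (etaStar_appR he)
          have s3 : EtaStar (.lam (.app (t.lift 0) (.var 0))) t :=
            Relation.ReflTransGen.single (Eta.eta t)
          exact (s1.trans s2).trans s3
      | all A₁ =>
          obtain ⟨P1, h0⟩ := hP
          let w := TLW 0 d
          have h0' : 0 ∈ Ty.tfv (Ty.tlift 1 A₁) :=
            (Ty.mem_tfv_tlift A₁ 1 0).2 (Or.inl ⟨one_pos, h0⟩)
          have hv0 : (Ty.var 0).Proper := trivial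
          let d2 : Deriv (Γ.map (Ty.tlift 0)) t A₁ :=
            cty (Ty.tsubst_tlift_var0 A₁ 0) (.allE (.var 0) hv0 h0' w.1)
          have hd2 : HP d2 := (hp_cty _ _).2 (.allE _ _ _ _ (w.2.1 hd))
          obtain ⟨t', ⟨d', hd'⟩, h'⟩ := ih A₁ (by simp [sizeTy] at hA ⊢; omega) P1
            (Γ.map (Ty.tlift 0))
            (by
              intro B hB
              obtain ⟨CC, hc, rfl⟩ := List.mem_map.1 hB
              exact (Ty.Proper_tlift CC 0).2 (hΓ CC hc))
            t ht ⟨d2, hd2⟩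
          exact ⟨t', ⟨.allI h0 d', .allI _ _ hd'⟩, h'⟩

theorem hpAux : ∀ (N : ℕ) {Γ : List Ty} {t : Trm} {A : Ty} (d : Deriv Γ t A),
    dsize d ≤ N → isHeadVar t → BetaNormal t →
    (∀ (v : Trm) (Δ : List Ty) (B : Ty), sizeT v < sizeT t → BetaNormal v → Deriv Δ v B →
      ∃ v', (∃ e : Deriv Δ v' B, EP e) ∧ EtaStar v' v) →
    (∃ t', isHeadVar t' ∧ (∃ d' : Deriv Γ t' A, HP d') ∧ EtaStar t' t)
    ∨ (∃ (A₁ : Ty) (e : Deriv (Γ.map (Ty.tlift 0)) t A₁), A = Ty.all A₁ ∧ dsize e < dsize d) := by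
  intro N
  induction N with
  | zero => intro Γ t A d hd _ _ _; cases d <;> simp [dsize] at hd
  | succ N ih =>
      intro Γ t A d hd ht hn IH
      cases d with
      | ax h1 h2 => exact Or.inl ⟨_, ht, ⟨.ax h1 h2, .ax _ _⟩, Relation.ReflTransGen.refl⟩
      | arrI hA d' => exact ht.elim
      | allI h d' => exact Or.inr ⟨_, d', rfl, by simp [dsize]⟩
      | arrE d₁ d₂ =>
          rename_i u v
          have res := ih d₁ (by simp [dsize] at hd ⊢; omega) ht (bn_appL hn)
            (fun w Δ B hw hbn e => IH w Δ B (by simp [sizeT] at hw ⊢; omega) hbn e)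
          rcases res with ⟨u₀, hu₀, ⟨d₁', hp₁⟩, eu⟩ | ⟨A₁, e, heq, _⟩
          · obtain ⟨v', ⟨ev, hev⟩, hv⟩ := IH v Γ _ (by simp [sizeT] <;> omega) (bn_appR hn) d₂
            exact Or.inl ⟨.app u₀ v', hu₀, ⟨.arrE d₁' ev, .arrE _ _ hp₁ hev⟩,
              (etaStar_appL eu).trans (etaStar_appR hv)⟩
          · exact absurd heq (by simp)
      | allE G hG hA d₁ =>
          have res := ih d₁ (by simp [dsize] at hd ⊢; omega) ht hn IH
          rcases res with ⟨t₁, ht₁, ⟨d₁', hp₁⟩, e₁⟩ | ⟨A₂, e, heq, hsz⟩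
          · exact Or.inl ⟨t₁, ht₁, ⟨.allE G hG hA d₁', .allE _ _ _ _ hp₁⟩, e₁⟩
          · injection heq with h
            subst h
            let e₂ := cctx (map_cancel Γ G) (TSub G hG 0 e)
            have hsize : dsize e₂ = dsize e := by simp [e₂, dsize_cctx, dsize_TSub]
            have hsz₂ : dsize e₂ ≤ N := by
              simp [dsize] at hd; omega
            have res2 := ih e₂ hsz₂ ht hn IH
            rcases res2 with h | ⟨A₃, e₃, heq₃, hsz₃⟩
            · exact Or.inl h
            · exact Or.inr ⟨A₃, e₃, heq₃, by simp [dsize]; omega⟩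

theorem mainAux : ∀ (n : ℕ) (t : Trm), sizeT t ≤ n → ∀ (m : ℕ) (A : Ty), sizeTy A ≤ m →
    ∀ (Γ : List Ty) (d : Deriv Γ t A), BetaNormal t →
    ∃ t', (∃ d' : Deriv Γ t' A, EP d') ∧ EtaStar t' t := by
  intro n
  induction n with
  | zero => intro t h; have := sizeT_pos t; omega
  | succ n ihn =>
      intro t htn m
      induction m with
      | zero => intro A h; have := sizeTy_pos A; omega
      | succ m ihm =>
          intro A hAm Γ d hn
          cases A with
          | all A₁ =>
              have hP := dty d
              let w := TLW 0 d
              have h0' : 0 ∈ Ty.tfv (Ty.tlift 1 A₁) :=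
                (Ty.mem_tfv_tlift A₁ 1 0).2 (Or.inl ⟨one_pos, hP.2⟩)
              have hv0 : (Ty.var 0).Proper := trivial
              let d2 : Deriv (Γ.map (Ty.tlift 0)) t A₁ :=
                cty (Ty.tsubst_tlift_var0 A₁ 0) (.allE (.var 0) hv0 h0' w.1)
              obtain ⟨t', ⟨d', hd'⟩, h'⟩ := ihm A₁ (by simp [sizeTy] at hAm ⊢; omega)
                (Γ.map (Ty.tlift 0)) d2 hn
              exact ⟨t', ⟨.allI hP.2 d', .allI _ _ hd'⟩, h'⟩
          | var X =>
              cases t with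
              | lam u => exact absurd rfl ((lamInv (dsize d) d le_rfl _ (Inst.refl _)).1 X)
              | var k =>
                  rcases hpAux (dsize d) d le_rfl trivial hn
                    (fun v Δ B hv hbn e =>
                      ihn v (by simp [sizeT] at htn hv ⊢; omega) (sizeTy B) B le_rfl Δ e hbn)
                    with ⟨t₀, ht₀, ⟨d₀, hp₀⟩, h₀⟩ | ⟨A₁, _, heq, _⟩
                  · exact ⟨t₀, ⟨d₀, EP.head _ hp₀⟩, h₀⟩
                  · exact absurd heq (by simp)
              | app a b =>
                  rcases hpAux (dsize d) d le_rfl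
                    (headVar_of_bn _ hn (fun w e => by simp at e))
                    hn
                    (fun v Δ B hv hbn e =>
                      ihn v (by simp [sizeT] at htn hv ⊢; omega) (sizeTy B) B le_rfl Δ e hbn)
                    with ⟨t₀, ht₀, ⟨d₀, hp₀⟩, h₀⟩ | ⟨A₁, _, heq, _⟩
                  · exact ⟨t₀, ⟨d₀, EP.head _ hp₀⟩, h₀⟩
                  · exact absurd heq (by simp)
          | arr A₁ A₂ =>
              cases t with
              | lam u =>
                  obtain ⟨e⟩ := (lamInv (dsize d) d le_rfl _ (Inst.refl _)).2 A₁ A₂ rfl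
                  have P1 : A₁.Proper := (dty d).1
                  obtain ⟨u', ⟨d', hd'⟩, hu⟩ := ihn u (by simp [sizeT] at htn ⊢; omega)
                    (sizeTy A₂) A₂ le_rfl (A₁ :: Γ) e (bn_lam hn)
                  exact ⟨.lam u', ⟨.arrI P1 d', .arrI _ _ hd'⟩, etaStar_lam hu⟩
              | var k =>
                  rcases hpAux (dsize d) d le_rfl trivial hn
                    (fun v Δ B hv hbn e =>
                      ihn v (by simp [sizeT] at htn hv ⊢; omega) (sizeTy B) B le_rfl Δ e hbn)
                    with ⟨t₀, ht₀, ⟨d₀, hp₀⟩, h₀⟩ | ⟨A₃, _, heq, _⟩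
                  · obtain ⟨t', dd, h'⟩ := expand (sizeTy (Ty.arr A₁ A₂)) _ le_rfl (dty d) Γ
                      (dctx d) t₀ ht₀ ⟨d₀, hp₀⟩
                    exact ⟨t', dd, h'.trans h₀⟩
                  · exact absurd heq (by simp)
              | app a b =>
                  rcases hpAux (dsize d) d le_rfl
                    (headVar_of_bn _ hn (fun w e => by simp at e))
                    hn
                    (fun v Δ B hv hbn e =>
                      ihn v (by simp [sizeT] at htn hv ⊢; omega) (sizeTy B) B le_rfl Δ e hbn)
                    with ⟨t₀, ht₀, ⟨d₀, hp₀⟩, h₀⟩ | ⟨A₃, _, heq, _⟩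
                  · obtain ⟨t', dd, h'⟩ := expand (sizeTy (Ty.arr A₁ A₂)) _ le_rfl (dty d) Γ
                      (dctx d) t₀ ht₀ ⟨d₀, hp₀⟩
                    exact ⟨t', dd, h'.trans h₀⟩
                  · exact absurd heq (by simp)
/-- every β-normal typable term η-expands to an η-long term of the
same type in the same context. -/
theorem stmt10 (Γ : List Ty) (t : Trm) (A : Ty) (hn : BetaNormal t)
    (h : Nonempty (Deriv Γ t A)) :
    ∃ t' : Trm, EtaLong Γ t' A ∧ EtaStar t' t := by
  obtain ⟨d⟩ := h
  exact mainAux (sizeT t) t le_rfl (sizeTy A) A le_rfl Γ d hn
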